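/- arXiv:1301.1512 — 3 statements merged into one kernel-verified Lean document; each statement's English description precedes it below -/
import Mathlib

section
/- Let G be a graph on n ≥ 4 vertices containing a cycle C of length n−1, and let x be the unique vertex of G not on C. If d(x) ≥ n/2, then G is pancyclic. -/
open SimpleGraph

/-- `G` contains a cycle of length `k`. -/
def HasCycleLength {V : Type} (G : SimpleGraph V) (k : ℕ) : Prop :=
  ∃ (v : V) (c : G.Walk v v), c.IsCycle ∧ c.length = k

/-- A graph on `n` vertices is pancyclic if it contains cycles of every length from 3 to `n`. -/
def IsPancyclic {V : Type} [Fintype V] (G : SimpleGraph V) : Prop :=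
  ∀ k : ℕ, 3 ≤ k → k ≤ Fintype.card V → HasCycleLength G k

/-- A graph is Hamiltonian if it contains a spanning cycle. -/
def IsHamiltonianGraph {V : Type} (G : SimpleGraph V) : Prop :=
  ∃ (v : V) (c : G.Walk v v), c.IsCycle ∧ ∀ u : V, u ∈ c.support

/-- A graph is 2-connected if it has at least 3 vertices and deleting any single
vertex leaves a connected graph. -/
def TwoConnected {V : Type} [Fintype V] (G : SimpleGraph V) : Prop :=
  3 ≤ Fintype.card V ∧ ∀ v : V, (G.induce {u : V | u ≠ v}).Connected

/-- A (finite) graph is a cycle iff it is connected and 2-regular. -/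
def IsCycleGraph {V : Type} [Fintype V] (G : SimpleGraph V) [DecidableRel G.Adj] : Prop :=
  G.Connected ∧ ∀ v : V, G.degree v = 2

/-- `G` is `R`-f₁-heavy: for every induced copy of `R` in `G` (given by a graph
embedding `f : R ↪g G`) and every pair of vertices at distance 2 in that copy,
one of them has degree at least `(n+1)/2` in `G`. -/
def F1Heavy {V W : Type} [Fintype V] (G : SimpleGraph V) [DecidableRel G.Adj]
    (R : SimpleGraph W) : Prop :=
  ∀ (f : R ↪g G) (a b : W), R.dist a b = 2 →
    Fintype.card V + 1 ≤ 2 * max (G.degree (f a)) (G.degree (f b))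

/-- `G` is `R`-f-heavy: as above but with degree at least `n/2`. -/
def FHeavy {V W : Type} [Fintype V] (G : SimpleGraph V) [DecidableRel G.Adj]
    (R : SimpleGraph W) : Prop :=
  ∀ (f : R ↪g G) (a b : W), R.dist a b = 2 →
    Fintype.card V ≤ 2 * max (G.degree (f a)) (G.degree (f b))

/-- `G` is `R`-free: no induced subgraph of `G` is isomorphic to `R`. -/
def RFree {V W : Type} (G : SimpleGraph V) (R : SimpleGraph W) : Prop :=
  IsEmpty (R ↪g G)

/-- The claw `K_{1,3}`: vertex `0` is the center, adjacent to `1`, `2`, `3`. -/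
def claw : SimpleGraph (Fin 4) := SimpleGraph.fromRel (fun a _ => a = 0)

/-- `Z_i`: the path `0 1 2 ... (i+2)` together with the chord `{0,2}`,
i.e. a triangle `0 1 2` with a path of `i` edges attached at vertex `2`. -/
def Zgraph (i : ℕ) : SimpleGraph (Fin (i + 3)) :=
  SimpleGraph.fromRel (fun a b => b.val = a.val + 1 ∨ (a.val = 0 ∧ b.val = 2))

/-- The net `N`: triangle `0 1 2` with pendant edges `0-3`, `1-4`, `2-5`. -/
def netGraph : SimpleGraph (Fin 6) :=
  SimpleGraph.fromRel (fun a b =>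
    (a.val = 0 ∧ b.val = 1) ∨ (a.val = 1 ∧ b.val = 2) ∨ (a.val = 0 ∧ b.val = 2) ∨
    (a.val = 0 ∧ b.val = 3) ∨ (a.val = 1 ∧ b.val = 4) ∨ (a.val = 2 ∧ b.val = 5))

/-- The wounded `W`: triangle `0 1 2` with a pendant edge `0-3` and a pendant
path `1-4-5` of two edges. -/
def woundedGraph : SimpleGraph (Fin 6) :=
  SimpleGraph.fromRel (fun a b =>
    (a.val = 0 ∧ b.val = 1) ∨ (a.val = 1 ∧ b.val = 2) ∨ (a.val = 0 ∧ b.val = 2) ∨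
    (a.val = 0 ∧ b.val = 3) ∨ (a.val = 1 ∧ b.val = 4) ∨ (a.val = 4 ∧ b.val = 5))

namespace PancAux
variable {V : Type} {G : SimpleGraph V}

lemma getVert_eq_get {u v : V} (p : G.Walk u v) (n : ℕ) (h : n ≤ p.length) :
    p.getVert n = p.support.get ⟨n, by rw [Walk.length_support]; omega⟩ := by
  induction p generalizing n with
  | nil =>
    have : n = 0 := by simpa using h
    subst this; rfl
  | cons hadj q ih =>
    cases n with
    | zero => rfl
    | succ n =>
      simp only [Walk.length_cons] at h
      simp [Walk.getVert_cons_succ, Walk.support_cons, ih n (by omega)]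

lemma cycle_getVert_inj {v : V} (c : G.Walk v v) (hc : c.IsCycle) {i j : ℕ}
    (hi' : i < c.length) (hj' : j < c.length)
    (h : c.getVert (i + 1) = c.getVert (j + 1)) : i = j := by
  have hnd := hc.support_nodup
  have hti : i < c.support.tail.length := by
    simp [List.length_tail, Walk.length_support]; omega
  have htj : j < c.support.tail.length := by
    simp [List.length_tail, Walk.length_support]; omega
  have h1 : c.getVert (i + 1) = c.support.tail.get ⟨i, hti⟩ := by
    rw [getVert_eq_get c (i + 1) (by omega), List.get_tail]
  have h2 : c.getVert (j + 1) = c.support.tail.get ⟨j, htj⟩ := by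
    rw [getVert_eq_get c (j + 1) (by omega), List.get_tail]
  rw [h1, h2] at h
  have := (List.Nodup.get_inj_iff hnd).mp h
  exact Fin.mk.injEq .. ▸ this

lemma walk_of_chain (f : ℕ → V) (hadj : ∀ i, G.Adj (f i) (f (i + 1))) :
    ∀ (j a : ℕ), ∃ p : G.Walk (f a) (f (a + j)), p.length = j ∧
      p.support = (List.range (j + 1)).map (fun t => f (a + t)) := by
  have hrange : ∀ (b n : ℕ), (List.range (n + 1)).map (fun t => f (b + t)) =
      f b :: (List.range n).map (fun t => f (b + 1 + t)) := by
    intro b n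
    rw [List.range_succ_eq_map, List.map_cons, List.map_map]
    refine congrArg₂ _ (by simp) (List.map_congr_left fun t _ => ?_)
    simp only [Function.comp_apply]; congr 1; omega
  intro j
  induction j with
  | zero => intro a; exact ⟨Walk.nil, rfl, by simp [hrange a 0]⟩
  | succ j ih =>
    intro a
    obtain ⟨p, hl, hs⟩ := ih (a + 1)
    refine ⟨(Walk.cons (hadj a) p).copy rfl (by congr 1; omega), by simp [hl], ?_⟩
    rw [Walk.support_copy, Walk.support_cons, hs, hrange a (j + 1)]

end PancAux

theorem pancyclic_of_heavy_vertex_off_cycle {V : Type} [Fintype V] (G : SimpleGraph V)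
    [DecidableRel G.Adj] (hn : 4 ≤ Fintype.card V)
    (v : V) (c : G.Walk v v) (hc : c.IsCycle)
    (hlen : c.length = Fintype.card V - 1)
    (x : V) (hx : x ∉ c.support)
    (hdeg : Fintype.card V ≤ 2 * G.degree x) :
    IsPancyclic G := by
  classical
  intro k hk3 hkn
  set n := Fintype.card V with hn'
  set m := n - 1 with hmdef
  have hm3 : 3 ≤ m := by omega
  haveI : NeZero m := ⟨by omega⟩
  have hlen' : c.length = m := hlen
  set fZ : ZMod m → V := fun i => c.getVert (i.val + 1) with hfZ
  have hvlt : ∀ i : ZMod m, i.val < m := fun i => ZMod.val_lt i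
  have hinj : Function.Injective fZ := by
    intro i j h
    have := PancAux.cycle_getVert_inj c hc (by rw [hlen']; exact hvlt i)
      (by rw [hlen']; exact hvlt j) h
    exact ZMod.val_injective m this
  have hmem : ∀ i : ZMod m, fZ i ∈ c.support := by
    intro i
    rw [Walk.mem_support_iff_exists_getVert]
    exact ⟨i.val + 1, rfl, by rw [hlen']; have := hvlt i; omega⟩
  have hsucc_val : ∀ i : ZMod m, (i + 1).val = (i.val + 1) % m := by
    intro i
    have h1 : ((i.val + 1 : ℕ) : ZMod m) = i + 1 := by
      rw [Nat.cast_add, Nat.cast_one, ZMod.natCast_val, ZMod.cast_id]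
    rw [← h1, ZMod.val_natCast]
  have hadjZ : ∀ i : ZMod m, G.Adj (fZ i) (fZ (i + 1)) := by
    intro i
    by_cases hlt : i.val + 1 < m
    · have hv : (i + 1).val = i.val + 1 := by
        rw [hsucc_val i, Nat.mod_eq_of_lt hlt]
      show G.Adj (c.getVert (i.val + 1)) (c.getVert ((i + 1).val + 1))
      rw [hv]
      exact c.adj_getVert_succ (by rw [hlen']; exact hlt)
    · have heq : i.val + 1 = m := by have := hvlt i; omega
      have hv : (i + 1).val = 0 := by rw [hsucc_val i, heq, Nat.mod_self]
      show G.Adj (c.getVert (i.val + 1)) (c.getVert ((i + 1).val + 1))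
      rw [hv, heq, ← hlen', c.getVert_length]
      have h0 := c.adj_getVert_succ (i := 0) (by rw [hlen']; omega)
      rw [c.getVert_zero] at h0
      simpa using h0
  -- every vertex other than x is in the range of fZ
  have hcover : ∀ y : V, y ≠ x → ∃ i : ZMod m, fZ i = y := by
    intro y hyx
    have hnd := hc.support_nodup
    have htl : c.support.tail.length = m := by
      rw [List.length_tail, Walk.length_support, hlen']
      omega
    have hcardt : c.support.tail.toFinset.card = m := by
      rw [List.toFinset_card_of_nodup hnd, htl]
    have hxnot : x ∉ c.support.tail.toFinset := fun h =>
      hx (List.mem_of_mem_tail (List.mem_toFinset.mp h))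
    have huniv : insert x c.support.tail.toFinset = Finset.univ := by
      apply Finset.eq_univ_of_card
      rw [Finset.card_insert_of_notMem hxnot, hcardt]
      omega
    have hy : y ∈ insert x c.support.tail.toFinset := huniv ▸ Finset.mem_univ y
    rcases Finset.mem_insert.mp hy with h | h
    · exact absurd h hyx
    have hy_sup : y ∈ c.support := List.mem_of_mem_tail (List.mem_toFinset.mp h)
    obtain ⟨n₀, hgv, hn₀⟩ := Walk.mem_support_iff_exists_getVert.mp hy_sup
    have : ∃ n₁, 1 ≤ n₁ ∧ n₁ ≤ m ∧ c.getVert n₁ = y := by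
      rcases Nat.eq_zero_or_pos n₀ with h0 | h0
      · refine ⟨m, by omega, le_rfl, ?_⟩
        rw [← hlen', c.getVert_length, ← hgv, h0, c.getVert_zero]
      · exact ⟨n₀, h0, by omega, hgv⟩
    obtain ⟨n₁, hn₁1, hn₁m, hgv'⟩ := this
    refine ⟨((n₁ - 1 : ℕ) : ZMod m), ?_⟩
    show c.getVert (((n₁ - 1 : ℕ) : ZMod m).val + 1) = y
    rw [ZMod.val_natCast, Nat.mod_eq_of_lt (by omega)]
    rw [show n₁ - 1 + 1 = n₁ by omega, hgv']
  -- the neighbor index set S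
  set S : Finset (ZMod m) := Finset.univ.filter (fun i => G.Adj x (fZ i)) with hSdef
  have hS_image : S.image fZ = G.neighborFinset x := by
    ext y
    simp only [Finset.mem_image, hSdef, Finset.mem_filter, Finset.mem_univ, true_and,
      mem_neighborFinset]
    constructor
    · rintro ⟨i, hi, rfl⟩; exact hi
    · intro hxy
      obtain ⟨i, rfl⟩ := hcover y hxy.ne'
      exact ⟨i, hxy, rfl⟩
  have hS_card : S.card = G.degree x := by
    have h := congrArg Finset.card hS_image
    rwa [Finset.card_image_of_injective _ hinj] at h
  have hS2 : m < 2 * S.card := by rw [hS_card]; omega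
  -- pigeonhole
  set jn := k - 2 with hjn
  have hjn1 : 1 ≤ jn := by omega
  have hjnm : jn ≤ m - 1 := by omega
  set j : ZMod m := ((jn : ℕ) : ZMod m) with hj
  set T : Finset (ZMod m) := S.image (· + j) with hT
  have hT_card : T.card = S.card :=
    Finset.card_image_of_injective _ (add_left_injective j)
  have hST : (S ∩ T).Nonempty := by
    rw [← Finset.card_pos]
    have h1 := Finset.card_union_add_card_inter S T
    have h2 : (S ∪ T).card ≤ m := le_trans (Finset.card_le_univ _) (by rw [ZMod.card])
    omega
  obtain ⟨w0, hw0⟩ := hST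
  rw [Finset.mem_inter] at hw0
  obtain ⟨hw0S, hw0T⟩ := hw0
  obtain ⟨a, haS, haw⟩ := Finset.mem_image.mp hw0T
  have ha : G.Adj x (fZ a) := (Finset.mem_filter.mp haS).2
  have hb : G.Adj x (fZ (a + j)) := by
    have := (Finset.mem_filter.mp hw0S).2
    rwa [← haw] at this
  -- build the cycle
  set f : ℕ → V := fun t => fZ (a + (t : ZMod m)) with hf
  have hfadj : ∀ i, G.Adj (f i) (f (i + 1)) := by
    intro i
    have := hadjZ (a + (i : ZMod m))
    simpa [hf, Nat.cast_add, Nat.cast_one, add_assoc] using this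
  obtain ⟨p, hpl, hps⟩ := PancAux.walk_of_chain f hfadj jn 0
  have hmemf : ∀ t : ℕ, f t ∈ c.support := fun t => hmem _
  have hpPath : p.IsPath := by
    apply Walk.IsPath.mk'
    rw [hps]
    apply List.Nodup.map_on _ List.nodup_range
    intro s hs t ht hft
    simp only [List.mem_range] at hs ht
    have h1 : a + ((0 + s : ℕ) : ZMod m) = a + ((0 + t : ℕ) : ZMod m) := hinj hft
    have h2 : ((s : ℕ) : ZMod m) = ((t : ℕ) : ZMod m) := by
      simpa using add_left_cancel h1
    rw [ZMod.natCast_eq_natCast_iff'] at h2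
    rw [Nat.mod_eq_of_lt (by omega), Nat.mod_eq_of_lt (by omega)] at h2
    omega
  have hxp : x ∉ p.support := by
    rw [hps]
    intro hmem'
    obtain ⟨t, -, ht⟩ := List.mem_map.mp hmem'
    exact hx (ht ▸ hmemf (0 + t))
  have hend : f (0 + jn) = fZ (a + j) := by simp [hf, hj]
  have hb' : G.Adj (f (0 + jn)) x := by rw [hend]; exact hb.symm
  set q := p.concat hb' with hq
  have hqPath : q.IsPath := by
    apply Walk.IsPath.mk'
    rw [hq, Walk.support_concat, List.nodup_append]
    exact ⟨hpPath.support_nodup, List.nodup_singleton x,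
      fun y hy z hz hyz => hxp (by rw [List.mem_singleton] at hz; rw [← hz, ← hyz]; exact hy)⟩
  have hf0 : f 0 = fZ a := by simp [hf]
  have hxadj : G.Adj x (f 0) := by rw [hf0]; exact ha
  have hjne : f 0 ≠ f (0 + jn) := by
    intro h
    have h1 : a = a + j := hinj (by rw [← hf0, ← hend, h])
    have h2 : j = 0 := left_eq_add.mp h1
    rw [hj] at h2
    have := (ZMod.natCast_eq_natCast_iff' jn 0 m).mp (by simpa using h2)
    rw [Nat.mod_eq_of_lt (by omega), Nat.zero_mod] at this
    omega
  have hnotedge : s(x, f 0) ∉ q.edges := by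
    rw [hq, Walk.edges_concat, List.concat_eq_append]
    intro hmem'
    rcases List.mem_append.mp hmem' with h | h
    on_goal 2 => replace h := List.mem_singleton.mp h
    · exact hxp (p.fst_mem_support_of_mem_edges h)
    · rw [Sym2.eq_iff] at h
      rcases h with ⟨h1, h2⟩ | ⟨h1, h2⟩
      · exact hx (h1 ▸ hmemf (0 + jn))
      · exact hjne h2
  have hcyc : (Walk.cons hxadj q).IsCycle :=
    (Walk.cons_isCycle_iff q hxadj).mpr ⟨hqPath, hnotedge⟩
  refine ⟨x, Walk.cons hxadj q, hcyc, ?_⟩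
  rw [Walk.length_cons, hq, Walk.length_concat, hpl]
  omega
end

section
/- Let G be a graph on n vertices with a Hamilton cycle C. If there exist two vertices x, y of G that are consecutive on C (i.e., d_C(x,y) = 1) and satisfy d(x) + d(y) ≥ n + 1, then G is pancyclic. -/
open SimpleGraph

section AuxProof
variable {V : Type}

lemma exists_walk_support (G : SimpleGraph V) :
    ∀ (t : List V) (a : V), List.Chain G.Adj a t →
      ∃ w : G.Walk a ((a :: t).getLast (List.cons_ne_nil a t)), w.support = a :: t := by
  intro t
  induction t with
  | nil => exact fun a _ => ⟨(SimpleGraph.Walk.nil : G.Walk a a).copy rfl (by simp), by simp⟩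
  | cons b t ih =>
    intro a h
    simp only [List.Chain, List.isChain_cons_cons] at h
    obtain ⟨w, hw⟩ := ih b h.2
    refine ⟨(SimpleGraph.Walk.cons h.1 w).copy rfl ?_, ?_⟩
    · exact (List.getLast_cons (List.cons_ne_nil b t)).symm
    · simp [hw]

lemma edge_not_mem {G : SimpleGraph V} {a b : V} (w : G.Walk a b) (hp : w.IsPath)
    (hl : 2 ≤ w.length) : s(b, a) ∉ w.edges := by
  cases w with
  | nil => simp
  | @cons _ a' _ h p =>
    rw [SimpleGraph.Walk.cons_isPath_iff] at hp
    simp only [SimpleGraph.Walk.edges_cons, List.mem_cons]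
    rintro (heq | hmem)
    · rw [Sym2.eq_iff] at heq
      rcases heq with ⟨hba, haa'⟩ | ⟨hba', haa⟩
      · exact hp.2 (hba ▸ p.end_mem_support)
      · subst hba'
        cases p with
        | nil => simp at hl
        | cons h' q =>
          rw [SimpleGraph.Walk.cons_isPath_iff] at hp
          exact hp.1.2 q.end_mem_support
    · exact hp.2 (p.snd_mem_support_of_mem_edges hmem)

lemma hasCycleLength_of_fn (G : SimpleGraph V) (k : ℕ) (hk : 3 ≤ k) (f : ℕ → V)
    (hinj : ∀ i < k, ∀ j < k, f i = f j → i = j)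
    (hadj : ∀ i < k, G.Adj (f i) (f ((i + 1) % k))) : HasCycleLength G k := by
  have hch : List.Chain G.Adj (f 0) ((List.range' 1 (k - 1)).map f) := by
    have h1 : List.Chain' G.Adj ((List.range k).map f) := by
      rw [List.Chain', List.isChain_map]
      obtain ⟨k', rfl⟩ : ∃ k', k = k' + 1 := ⟨k - 1, by omega⟩
      apply (List.isChain_range_succ _ k').mpr
      intro m hm
      have := hadj m (by omega)
      rwa [Nat.mod_eq_of_lt (by omega)] at this
    have h2 : (List.range k).map f = f 0 :: (List.range' 1 (k - 1)).map f := by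
      rw [List.range_eq_range']
      obtain ⟨k', rfl⟩ : ∃ k', k = k' + 1 := ⟨k - 1, by omega⟩
      rw [List.range'_succ]
      simp
    rwa [h2] at h1
  obtain ⟨w, hw⟩ := exists_walk_support G ((List.range' 1 (k - 1)).map f) (f 0) hch
  have hlist : f 0 :: (List.range' 1 (k - 1)).map f = (List.range k).map f := by
    rw [List.range_eq_range']
    obtain ⟨k', rfl⟩ : ∃ k', k = k' + 1 := ⟨k - 1, by omega⟩
    rw [List.range'_succ]; simp
  have hlast : (f 0 :: (List.range' 1 (k - 1)).map f).getLast (List.cons_ne_nil _ _) = f (k - 1) := by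
    rw [List.getLast_eq_getElem]
    simp only [hlist]
    have hlen : ((List.range k).map f).length = k := by simp
    simp only [hlen]
    rw [List.getElem_map, List.getElem_range]
  have hsupp : w.support = (List.range k).map f := by rw [hw, hlist]
  have hpath : w.IsPath := by
    rw [SimpleGraph.Walk.isPath_def, hsupp]
    refine List.Nodup.map_on ?_ List.nodup_range
    intro i hi j hj hij
    exact hinj i (List.mem_range.mp hi) j (List.mem_range.mp hj) hij
  have hwlen : w.length = k - 1 := by
    have := w.length_support
    rw [hsupp] at this
    simp at this; omega
  have hadj'' : G.Adj ((f 0 :: (List.range' 1 (k - 1)).map f).getLast (List.cons_ne_nil _ _)) (f 0) := by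
    rw [hlast]
    have := hadj (k - 1) (by omega)
    have hmod : (k - 1 + 1) % k = 0 := by
      have : k - 1 + 1 = k := by omega
      rw [this, Nat.mod_self]
    rwa [hmod] at this
  refine ⟨_, SimpleGraph.Walk.cons hadj'' w, ?_, ?_⟩
  · rw [SimpleGraph.Walk.cons_isCycle_iff]
    refine ⟨hpath, ?_⟩
    exact edge_not_mem w hpath (by omega)
  · simp only [SimpleGraph.Walk.length_cons]
    omega

lemma core [Fintype V] (G : SimpleGraph V) [DecidableRel G.Adj] (n : ℕ) (hn : 3 ≤ n)
    (hcard : Fintype.card V = n) (g : ℕ → V)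
    (hsurj : ∀ u : V, ∃ i, i < n ∧ g i = u)
    (hadj : ∀ i < n, G.Adj (g i) (g ((i + 1) % n)))
    (hdeg : n + 1 ≤ G.degree (g 0) + G.degree (g 1)) :
    ∀ k, 3 ≤ k → k ≤ n → HasCycleLength G k := by
  -- injectivity
  have hinj : ∀ i < n, ∀ j < n, g i = g j → i = j := by
    have hbij : Function.Bijective (fun i : Fin n => g i.val) := by
      rw [Fintype.bijective_iff_surjective_and_card]
      constructor
      · intro u
        obtain ⟨i, hi, hgi⟩ := hsurj u
        exact ⟨⟨i, hi⟩, hgi⟩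
      · simp [hcard]
    intro i hi j hj hij
    have := hbij.injective (a₁ := ⟨i, hi⟩) (a₂ := ⟨j, hj⟩) hij
    simpa using congrArg Fin.val this
  have hadjlt : ∀ i, i + 1 < n → G.Adj (g i) (g (i + 1)) := by
    intro i h
    have := hadj i (by omega)
    rwa [Nat.mod_eq_of_lt (by omega)] at this
  have hadjlast : G.Adj (g (n - 1)) (g 0) := by
    have := hadj (n - 1) (by omega)
    rwa [show n - 1 + 1 = n by omega, Nat.mod_self] at this
  intro k hk3 hkn
  rcases Nat.eq_or_lt_of_le hkn with hkn' | hkn'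
  · -- k = n : the Hamilton cycle itself
    subst hkn'
    exact hasCycleLength_of_fn G k hk3 g hinj hadj
  -- now k ≤ n - 1
  by_contra hno
  set v := k - 2 with hv
  have hv1 : 1 ≤ v := by omega
  have hv3 : v ≤ n - 3 := by omega
  set A : Finset ℕ := (Finset.Icc 2 (n - 1)).filter
    (fun i => G.Adj (g 0) (g i) ∨ i = n - 1) with hA
  set B : Finset ℕ := (Finset.Icc 2 (n - 1)).filter
    (fun i => G.Adj (g 1) (g i) ∨ i = 2) with hB
  -- degree counts
  have hcardN : ∀ x : V, ((Finset.range n).filter (fun i => G.Adj x (g i))).card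
      = G.degree x := by
    intro x
    rw [← card_neighborFinset_eq_degree]
    apply Finset.card_bij (fun a _ => g a)
    · intro a ha
      simp only [Finset.mem_filter, Finset.mem_range] at ha
      rw [mem_neighborFinset]
      exact ha.2
    · intro a ha b hb hab
      simp only [Finset.mem_filter, Finset.mem_range] at ha hb
      exact hinj a ha.1 b hb.1 hab
    · intro u hu
      rw [mem_neighborFinset] at hu
      obtain ⟨i, hi, rfl⟩ := hsurj u
      exact ⟨i, by simp [Finset.mem_filter, Finset.mem_range, hi, hu], rfl⟩
  have hAcard : G.degree (g 0) - 1 ≤ A.card := by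
    have hsub : ((Finset.range n).filter (fun i => G.Adj (g 0) (g i))).erase 1 ⊆ A := by
      intro i hi
      simp only [Finset.mem_erase, Finset.mem_filter, Finset.mem_range] at hi
      obtain ⟨hne, hilt, hadji⟩ := hi
      have hi0 : i ≠ 0 := by
        rintro rfl
        exact G.irrefl hadji
      simp only [hA, Finset.mem_filter, Finset.mem_Icc]
      exact ⟨⟨by omega, by omega⟩, Or.inl hadji⟩
    calc G.degree (g 0) - 1
        = ((Finset.range n).filter (fun i => G.Adj (g 0) (g i))).card - 1 := by rw [hcardN]
      _ ≤ (((Finset.range n).filter (fun i => G.Adj (g 0) (g i))).erase 1).card :=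
          Finset.pred_card_le_card_erase
      _ ≤ A.card := Finset.card_le_card hsub
  have hBcard : G.degree (g 1) - 1 ≤ B.card := by
    have hsub : ((Finset.range n).filter (fun i => G.Adj (g 1) (g i))).erase 0 ⊆ B := by
      intro i hi
      simp only [Finset.mem_erase, Finset.mem_filter, Finset.mem_range] at hi
      obtain ⟨hne, hilt, hadji⟩ := hi
      have hi1 : i ≠ 1 := by
        rintro rfl
        exact G.irrefl hadji
      simp only [hB, Finset.mem_filter, Finset.mem_Icc]
      exact ⟨⟨by omega, by omega⟩, Or.inl hadji⟩
    calc G.degree (g 1) - 1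
        = ((Finset.range n).filter (fun i => G.Adj (g 1) (g i))).card - 1 := by rw [hcardN]
      _ ≤ (((Finset.range n).filter (fun i => G.Adj (g 1) (g i))).erase 0).card :=
          Finset.pred_card_le_card_erase
      _ ≤ B.card := Finset.card_le_card hsub
  have hdx : G.degree (g 0) ≤ n - 1 := by
    have := G.degree_lt_card_verts (g 0)
    rw [hcard] at this; omega
  have hsum : n - 1 ≤ A.card + B.card := by
    have hd1 : 2 ≤ G.degree (g 1) := by omega
    omega
  -- membership unfolders
  have hmemA : ∀ a ∈ A, 2 ≤ a ∧ a ≤ n - 1 ∧ (G.Adj (g 0) (g a) ∨ a = n - 1) := by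
    intro a ha
    simp only [hA, Finset.mem_filter, Finset.mem_Icc] at ha
    exact ⟨ha.1.1, ha.1.2, ha.2⟩
  have hmemB : ∀ b ∈ B, 2 ≤ b ∧ b ≤ n - 1 ∧ (G.Adj (g 1) (g b) ∨ b = 2) := by
    intro b hb
    simp only [hB, Finset.mem_filter, Finset.mem_Icc] at hb
    exact ⟨hb.1.1, hb.1.2, hb.2⟩
  -- Construction 1 : if b ∈ B, b + v ≤ n and b + v - 1 ∈ A then a k-cycle exists
  have fact1 : ∀ b ∈ B, b + v ≤ n → b + v - 1 ∉ A := by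
    intro b hb hble hmem
    obtain ⟨hb2, hbn, hbadj⟩ := hmemB b hb
    obtain ⟨ha2, han, haadj⟩ := hmemA _ hmem
    apply hno
    apply hasCycleLength_of_fn G k hk3 (fun i => if i ≤ 1 then g i else g (b + i - 2))
    · intro i hi j hj hij
      split_ifs at hij with h1 h2 h2
      · exact hinj i (by omega) j (by omega) hij
      · have := hinj i (by omega) (b + j - 2) (by omega) hij; omega
      · have := hinj (b + i - 2) (by omega) j (by omega) hij; omega
      · have := hinj (b + i - 2) (by omega) (b + j - 2) (by omega) hij; omega
    · intro i hi
      rcases Nat.lt_or_ge i 2 with hi2 | hi2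
      · interval_cases i
        · rw [show (0 + 1) % k = 1 from Nat.mod_eq_of_lt (by omega)]
          rw [if_pos (by omega : (0:ℕ) ≤ 1), if_pos (by omega : (1:ℕ) ≤ 1)]
          exact hadjlt 0 (by omega)
        · rw [show (1 + 1) % k = 2 from Nat.mod_eq_of_lt (by omega)]
          rw [if_pos (by omega : (1:ℕ) ≤ 1), if_neg (by omega : ¬ (2:ℕ) ≤ 1)]
          rw [show b + 2 - 2 = b by omega]
          rcases hbadj with h | h
          · exact h
          · rw [h]; exact hadjlt 1 (by omega)
      · rcases Nat.lt_or_ge i (k - 1) with hik | hik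
        · rw [show (i + 1) % k = i + 1 from Nat.mod_eq_of_lt (by omega)]
          rw [if_neg (by omega : ¬ i ≤ 1), if_neg (by omega : ¬ i + 1 ≤ 1)]
          rw [show b + (i + 1) - 2 = (b + i - 2) + 1 by omega]
          exact hadjlt (b + i - 2) (by omega)
        · have hie : i = k - 1 := by omega
          rw [show (i + 1) % k = 0 by rw [show i + 1 = k by omega, Nat.mod_self]]
          rw [if_neg (by omega : ¬ i ≤ 1), if_pos (by omega : (0:ℕ) ≤ 1)]
          rw [show b + i - 2 = b + v - 1 by omega]
          rcases haadj with h | h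
          · exact h.symm
          · rw [h]; exact hadjlast
  -- Construction 2 : if b ∈ B, n + 1 ≤ b + v and b + v + 1 - n ∈ A then a k-cycle exists
  have fact2 : ∀ b ∈ B, n + 1 ≤ b + v → b + v + 1 - n ∉ A := by
    intro b hb hbge hmem
    obtain ⟨hb2, hbn, hbadj⟩ := hmemB b hb
    set a := b + v + 1 - n with haa
    obtain ⟨ha2, han, haadj⟩ := hmemA _ hmem
    have hav : a ≤ v := by omega
    have hab : a + 2 ≤ b := by omega
    have hb4 : 4 ≤ b := by omega
    have hgadj0 : G.Adj (g 0) (g a) := by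
      rcases haadj with h | h
      · exact h
      · omega
    have hgadj1 : G.Adj (g 1) (g b) := by
      rcases hbadj with h | h
      · exact h
      · omega
    apply hno
    apply hasCycleLength_of_fn G k hk3
      (fun i => if i = 0 then g 0 else if i ≤ a then g (a + 1 - i) else g (b + i - a - 1))
    · intro i hi j hj hij
      split_ifs at hij with h1 h2 h3 h3 h4 h2 h3 h3
      · omega
      · have := hinj 0 (by omega) (a + 1 - j) (by omega) hij; omega
      · have := hinj 0 (by omega) (b + j - a - 1) (by omega) hij; omega
      · have := hinj (a + 1 - i) (by omega) 0 (by omega) hij; omega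
      · have := hinj (a + 1 - i) (by omega) (a + 1 - j) (by omega) hij; omega
      · have := hinj (a + 1 - i) (by omega) (b + j - a - 1) (by omega) hij; omega
      · have := hinj (b + i - a - 1) (by omega) 0 (by omega) hij; omega
      · have := hinj (b + i - a - 1) (by omega) (a + 1 - j) (by omega) hij; omega
      · have := hinj (b + i - a - 1) (by omega) (b + j - a - 1) (by omega) hij; omega
    · intro i hi
      rcases Nat.eq_or_lt_of_le (Nat.zero_le i) with h0 | h0
      · -- i = 0
        rw [show (i + 1) % k = 1 by rw [← h0]; exact Nat.mod_eq_of_lt (by omega)]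
        rw [if_pos h0.symm, if_neg (by omega : ¬ (1:ℕ) = 0), if_pos (by omega : 1 ≤ a)]
        rw [show a + 1 - 1 = a by omega]
        exact hgadj0
      · rcases Nat.lt_or_ge i a with hia | hia
        · -- 1 ≤ i < a
          rw [show (i + 1) % k = i + 1 from Nat.mod_eq_of_lt (by omega)]
          rw [if_neg (by omega : ¬ i = 0), if_pos (by omega : i ≤ a),
            if_neg (by omega : ¬ i + 1 = 0), if_pos (by omega : i + 1 ≤ a)]
          rw [show a + 1 - (i + 1) = a - i by omega]
          have : G.Adj (g (a - i)) (g (a - i + 1)) := hadjlt (a - i) (by omega)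
          rw [show a - i + 1 = a + 1 - i by omega] at this
          exact this.symm
        · rcases Nat.eq_or_lt_of_le hia with hie | hia'
          · -- i = a
            rw [show (i + 1) % k = i + 1 from Nat.mod_eq_of_lt (by omega)]
            rw [if_neg (by omega : ¬ i = 0), if_pos (by omega : i ≤ a),
              if_neg (by omega : ¬ i + 1 = 0), if_neg (by omega : ¬ i + 1 ≤ a)]
            rw [show a + 1 - i = 1 by omega, show b + (i + 1) - a - 1 = b by omega]
            exact hgadj1
          · rcases Nat.lt_or_ge i (k - 1) with hik | hik
            · -- a < i < k - 1
              rw [show (i + 1) % k = i + 1 from Nat.mod_eq_of_lt (by omega)]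
              rw [if_neg (by omega : ¬ i = 0), if_neg (by omega : ¬ i ≤ a),
                if_neg (by omega : ¬ i + 1 = 0), if_neg (by omega : ¬ i + 1 ≤ a)]
              rw [show b + (i + 1) - a - 1 = (b + i - a - 1) + 1 by omega]
              exact hadjlt (b + i - a - 1) (by omega)
            · -- i = k - 1
              rw [show (i + 1) % k = 0 by rw [show i + 1 = k by omega, Nat.mod_self]]
              rw [if_neg (by omega : ¬ i = 0), if_neg (by omega : ¬ i ≤ a),
                if_pos (rfl : (0:ℕ) = 0)]
              rw [show b + i - a - 1 = n - 1 by omega]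
              exact hadjlast
  -- the injection Φ : B → Icc 2 (n-1) \ A
  have hAsub : A ⊆ Finset.Icc 2 (n - 1) := Finset.filter_subset _ _
  have hBle : B.card ≤ ((Finset.Icc 2 (n - 1)) \ A).card := by
    apply Finset.card_le_card_of_injOn (fun b => if b + v ≤ n then b + v - 1 else b + v + 1 - n)
    · intro b hb
      obtain ⟨hb2, hbn, _⟩ := hmemB b hb
      simp only [Finset.mem_coe, Finset.mem_sdiff, Finset.mem_Icc]
      split_ifs with hle
      · exact ⟨⟨by omega, by omega⟩, fact1 b hb hle⟩
      · exact ⟨⟨by omega, by omega⟩, fact2 b hb (by omega)⟩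
    · intro b1 hb1 b2 hb2 heq
      simp only [Finset.mem_coe] at hb1 hb2
      obtain ⟨h12, h1n, _⟩ := hmemB b1 hb1
      obtain ⟨h22, h2n, _⟩ := hmemB b2 hb2
      simp only at heq
      split_ifs at heq <;> omega
  have hIccA : ((Finset.Icc 2 (n - 1)) \ A).card = (n - 2) - A.card := by
    rw [Finset.card_sdiff_of_subset hAsub, Nat.card_Icc]
    omega
  have hAle : A.card ≤ n - 2 := by
    have := Finset.card_le_card hAsub
    rw [Nat.card_Icc] at this
    omega
  omega

lemma exists_add_mod (m q jj : ℕ) (hm : 0 < m) (hjj : jj < m) :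
    ∃ j, j < m ∧ (q + j) % m = jj := by
  rcases le_or_gt (q % m) jj with hle | hlt
  · refine ⟨jj - q % m, by omega, ?_⟩
    rw [← Nat.mod_add_mod, show q % m + (jj - q % m) = jj by omega, Nat.mod_eq_of_lt hjj]
  · have hr : q % m < m := Nat.mod_lt _ hm
    refine ⟨jj + m - q % m, by omega, ?_⟩
    rw [← Nat.mod_add_mod, show q % m + (jj + m - q % m) = jj + m by omega,
      Nat.add_mod_right, Nat.mod_eq_of_lt hjj]

lemma mod_add_mod_right (m a b : ℕ) : (a + b % m) % m = (a + b) % m := by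
  conv_lhs => rw [Nat.add_comm]
  rw [Nat.mod_add_mod, Nat.add_comm]


end AuxProof

theorem pancyclic_of_hamiltonian_consecutive_heavy_pair {V : Type} [Fintype V]
    (G : SimpleGraph V) [DecidableRel G.Adj]
    (v : V) (c : G.Walk v v) (hc : c.IsCycle) (hspan : ∀ u : V, u ∈ c.support)
    (x y : V) (hdist : (c.toSubgraph.spanningCoe).dist x y = 1)
    (hdeg : Fintype.card V + 1 ≤ G.degree x + G.degree y) :
    IsPancyclic G := by
  classical
  set m := c.length with hm
  have hm3 : 3 ≤ m := hc.three_le_length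
  have hm0 : 0 < m := by omega
  have hvm : c.getVert m = v := c.getVert_length
  have hv0 : c.getVert 0 = v := c.getVert_zero
  -- surjectivity of getVert on [0, m)
  have hsurjh : ∀ u : V, ∃ i, i < m ∧ c.getVert i = u := by
    intro u
    obtain ⟨i, hgi, him⟩ := SimpleGraph.Walk.mem_support_iff_exists_getVert.mp (hspan u)
    rcases Nat.eq_or_lt_of_le him with he | hlt
    · refine ⟨0, hm0, ?_⟩
      rw [hv0, ← hvm, hm, ← he]
      exact hgi
    · exact ⟨i, hlt, hgi⟩
  -- card V = m
  have hcardm : Fintype.card V = m := by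
    have h1 : Fintype.card V ≤ m := by
      have : Function.Surjective (fun i : Fin m => c.getVert i.val) := by
        intro u
        obtain ⟨i, hi, hgi⟩ := hsurjh u
        exact ⟨⟨i, hi⟩, hgi⟩
      simpa using Fintype.card_le_of_surjective _ this
    have h2 : m ≤ Fintype.card V := by
      have hnd : c.support.tail.Nodup := hc.support_nodup
      have hlen : c.support.tail.length = m := by
        have := c.length_support
        simp only [← hm] at this
        cases hs : c.support with
        | nil => rw [hs] at this; simp at this
        | cons a t => rw [hs] at this; simp at this ⊢; omega
      calc m = c.support.tail.toFinset.card := by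
              rw [List.toFinset_card_of_nodup hnd, hlen]
        _ ≤ Fintype.card V := Finset.card_le_univ _
    omega
  -- wrap
  have hwrap : ∀ jj, jj ≤ m → c.getVert (jj % m) = c.getVert jj := by
    intro jj hjj
    rcases Nat.eq_or_lt_of_le hjj with he | hlt
    · rw [he, Nat.mod_self, hv0, hvm]
    · rw [Nat.mod_eq_of_lt hlt]
  -- cyclic adjacency
  have hadjh : ∀ i < m, G.Adj (c.getVert i) (c.getVert ((i + 1) % m)) := by
    intro i hi
    rw [hwrap (i + 1) (by omega)]
    exact c.adj_getVert_succ (by rw [← hm]; exact hi)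
  -- x and y are consecutive on the cycle
  have hadjxy : c.toSubgraph.Adj x y := by
    have := (SimpleGraph.dist_eq_one_iff_adj).mp hdist
    rwa [SimpleGraph.Subgraph.spanningCoe_adj] at this
  obtain ⟨i, hsym, hilt⟩ := (c.toSubgraph_adj_iff).mp hadjxy
  rw [Sym2.eq_iff] at hsym
  have hmain : ∃ g : ℕ → V, g 0 = x ∧ g 1 = y ∧
      (∀ u : V, ∃ j, j < m ∧ g j = u) ∧
      (∀ j < m, G.Adj (g j) (g ((j + 1) % m))) := by
    have hilt' : i < m := by rw [hm]; exact hilt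
    rcases hsym with ⟨hx, hy⟩ | ⟨hy, hx⟩
    · -- forward orientation
      refine ⟨fun j => c.getVert ((i + j) % m), ?_, ?_, ?_, ?_⟩
      · show c.getVert ((i + 0) % m) = x
        rw [Nat.add_zero, Nat.mod_eq_of_lt hilt', hx]
      · show c.getVert ((i + 1) % m) = y
        rw [hwrap (i + 1) (by omega), hy]
      · intro u
        obtain ⟨jj, hjj, hgv⟩ := hsurjh u
        obtain ⟨j, hj, hmod⟩ := exists_add_mod m i jj hm0 hjj
        refine ⟨j, hj, ?_⟩
        show c.getVert ((i + j) % m) = u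
        rw [hmod, hgv]
      · intro j hj
        have ht : (i + j) % m < m := Nat.mod_lt _ hm0
        have := hadjh _ ht
        have hmod : ((i + j) % m + 1) % m = (i + (j + 1) % m) % m := by
          rw [Nat.mod_add_mod, mod_add_mod_right, ← Nat.add_assoc]
        rw [hmod] at this
        show G.Adj (c.getVert ((i + j) % m)) (c.getVert ((i + (j + 1) % m) % m))
        exact this
    · -- reverse orientation
      refine ⟨fun j => c.getVert ((i + 1 + (m - j % m)) % m), ?_, ?_, ?_, ?_⟩
      · show c.getVert ((i + 1 + (m - 0 % m)) % m) = x
        rw [Nat.zero_mod, Nat.sub_zero, Nat.add_mod_right, hwrap (i + 1) (by omega), hx]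
      · show c.getVert ((i + 1 + (m - 1 % m)) % m) = y
        rw [Nat.mod_eq_of_lt (by omega : 1 < m),
          show i + 1 + (m - 1) = i + m by omega, Nat.add_mod_right,
          Nat.mod_eq_of_lt hilt', hy]
      · intro u
        obtain ⟨jj, hjj, hgv⟩ := hsurjh u
        obtain ⟨j', hj', hmod⟩ := exists_add_mod m (i + 1) jj hm0 hjj
        rcases Nat.eq_zero_or_pos j' with h0 | hpos
        · refine ⟨0, hm0, ?_⟩
          show c.getVert ((i + 1 + (m - 0 % m)) % m) = u
          rw [Nat.zero_mod, Nat.sub_zero, Nat.add_mod_right, ← Nat.add_zero (i + 1), ← h0,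
            hmod, hgv]
          -- note: (i+1) % m vs (i+1+0) % m
        · refine ⟨m - j', by omega, ?_⟩
          show c.getVert ((i + 1 + (m - (m - j') % m)) % m) = u
          rw [Nat.mod_eq_of_lt (by omega : m - j' < m), show m - (m - j') = j' by omega,
            hmod, hgv]
      · intro j hj
        rcases Nat.lt_or_ge (j + 1) m with hlt | hge
        · set t := (i + 1 + (m - (j + 1))) % m with htdef
          have ht : t < m := Nat.mod_lt _ hm0
          have e1 : (t + 1) % m = (i + 1 + (m - j % m)) % m := by
            rw [htdef, Nat.mod_add_mod, show i + 1 + (m - (j + 1)) + 1 = i + 1 + (m - j) by omega,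
              Nat.mod_eq_of_lt (by omega : j < m)]
          have e2 : (i + 1 + (m - ((j + 1) % m) % m)) % m = t := by
            rw [Nat.mod_eq_of_lt hlt, Nat.mod_eq_of_lt hlt]
          have := (hadjh t ht).symm
          rw [e1] at this
          show G.Adj (c.getVert ((i + 1 + (m - j % m)) % m))
            (c.getVert ((i + 1 + (m - ((j + 1) % m) % m)) % m))
          rw [e2]
          exact this
        · have hje : j = m - 1 := by omega
          have hj1 : (j + 1) % m = 0 := by
            rw [show j + 1 = m by omega, Nat.mod_self]
          set t := (i + 1) % m with htdef
          have ht : t < m := Nat.mod_lt _ hm0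
          have e1 : (t + 1) % m = (i + 1 + (m - j % m)) % m := by
            rw [htdef, Nat.mod_add_mod, Nat.mod_eq_of_lt (by omega : j < m), hje,
              show i + 1 + 1 = i + 1 + (m - (m - 1)) by omega]
          have e2 : (i + 1 + (m - ((j + 1) % m) % m)) % m = t := by
            rw [hj1, Nat.zero_mod, Nat.sub_zero, Nat.add_mod_right]
          have := (hadjh t ht).symm
          rw [e1] at this
          show G.Adj (c.getVert ((i + 1 + (m - j % m)) % m))
            (c.getVert ((i + 1 + (m - ((j + 1) % m) % m)) % m))
          rw [e2]
          exact this
  obtain ⟨g, hg0, hg1, hgsurj, hgadj⟩ := hmain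
  intro k hk3 hkn
  refine core G m hm3 hcardm g hgsurj hgadj ?_ k hk3 (by omega)
  rw [hg0, hg1, ← hcardm]
  exact hdeg
end

section
/- Let G be a 2-connected graph which is not a cycle. If G contains no induced subgraph isomorphic to K_{1,3} and no induced subgraph isomorphic to Z_1, then G is pancyclic. -/
open SimpleGraph

section Auxiliary

variable {V : Type} {G : SimpleGraph V}

private lemma aux_length_rotate [DecidableEq V] {v u : V} (c : G.Walk v v)
    (h : u ∈ c.support) : (c.rotate u h).length = c.length := by
  rw [Walk.rotate, Walk.length_append, Nat.add_comm, ← Walk.length_append, c.take_spec h]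

private lemma aux_cycle_reverse {v : V} {c : G.Walk v v} (hc : c.IsCycle) :
    c.reverse.IsCycle := by
  obtain ⟨⟨ht, hne⟩, hnd⟩ := hc
  refine ⟨⟨ht.reverse _, fun h => hne (by simpa using congrArg Walk.reverse h)⟩, ?_⟩
  rw [Walk.support_reverse]
  have h1 : c.support.reverse = v :: c.support.reverse.tail := by
    rw [← Walk.support_reverse]; exact c.reverse.support_eq_cons
  have ht' : c.support.reverse = c.support.tail.reverse ++ [v] := by
    conv_lhs => rw [c.support_eq_cons]
    exact List.reverse_cons ..
  rcases hrev : c.support.tail.reverse with _ | ⟨y, ys⟩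
  · rw [hrev] at ht'
    rw [ht']
    simp
  · rw [hrev] at ht'
    rw [ht']
    have hy : y = v := by
      have h2 := ht'.symm.trans h1
      simpa using congrArg List.head? h2
    have hnd' : (y :: ys).Nodup := hrev ▸ (List.nodup_reverse.mpr hnd)
    rw [hy] at hnd'
    simp only [List.nodup_cons] at hnd'
    simp only [List.cons_append, List.tail_cons]
    rw [List.nodup_append]
    exact ⟨hnd'.2, List.nodup_singleton v, by simp [List.disjoint_singleton, hnd'.1]; exact fun a ha he => hnd'.1 (he ▸ ha)⟩

private lemma aux_splice {a b u : V} (h : G.Adj a b) (p : G.Walk b a)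
    (hc : (Walk.cons h p).IsCycle) (hu : u ∉ (Walk.cons h p).support)
    (h1 : G.Adj u a) (h2 : G.Adj u b) :
    ∃ w : G.Walk a a, w.IsCycle ∧ w.length = (Walk.cons h p).length + 1 := by
  rw [Walk.cons_isCycle_iff] at hc
  rw [Walk.support_cons, List.mem_cons] at hu
  push_neg at hu
  refine ⟨Walk.cons h1.symm (Walk.cons h2 p), ?_, by simp⟩
  rw [Walk.cons_isCycle_iff, Walk.cons_isPath_iff]
  refine ⟨⟨hc.1, hu.2⟩, ?_⟩
  rw [Walk.edges_cons, List.mem_cons]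
  push_neg
  constructor
  · intro he
    rw [Sym2.eq_iff] at he
    rcases he with ⟨rfl, -⟩ | ⟨rfl, -⟩
    · exact hu.1 rfl
    · exact G.irrefl h
  · intro he
    exact hu.2 (p.snd_mem_support_of_mem_edges he)

private lemma aux_no_claw (hclaw : RFree G claw) {v a b c : V}
    (hva : G.Adj v a) (hvb : G.Adj v b) (hvc : G.Adj v c)
    (hab : ¬G.Adj a b) (hac : ¬G.Adj a c) (hbc : ¬G.Adj b c)
    (nab : a ≠ b) (nac : a ≠ c) (nbc : b ≠ c) : False := by
  have nva := hva.ne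
  have nvb := hvb.ne
  have nvc := hvc.ne
  have hba : ¬G.Adj b a := fun h => hab h.symm
  have hca : ¬G.Adj c a := fun h => hac h.symm
  have hcb : ¬G.Adj c b := fun h => hbc h.symm
  refine hclaw.elim ⟨⟨![v, a, b, c], ?_⟩, ?_⟩
  · intro x y hxy
    fin_cases x <;> fin_cases y <;> simp_all <;> tauto
  · intro x y
    fin_cases x <;> fin_cases y <;>
      simp [claw, SimpleGraph.fromRel_adj, G.irrefl, hva, hvb, hvc, hva.symm, hvb.symm, hvc.symm,
        hab, hac, hbc, hba, hca, hcb, Fin.ext_iff, -Fin.val_eq_zero_iff] <;> tauto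

private lemma aux_no_Z1 (hZ1 : RFree G (Zgraph 1)) {a b b' u : V}
    (hbb' : G.Adj b b') (hab : G.Adj a b) (hab' : G.Adj a b') (hau : G.Adj a u)
    (hub : ¬G.Adj u b) (hub' : ¬G.Adj u b')
    (nbu : b ≠ u) (nb'u : b' ≠ u) : False := by
  have h1 := hbb'.ne
  have h2 := hab.ne
  have h3 := hab'.ne
  have h4 := hau.ne
  have hbu : ¬G.Adj b u := fun h => hub h.symm
  have hb'u : ¬G.Adj b' u := fun h => hub' h.symm
  refine hZ1.elim ⟨⟨![b, b', a, u], ?_⟩, ?_⟩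
  · intro x y hxy
    fin_cases x <;> fin_cases y <;> simp_all <;> tauto
  · intro x y
    fin_cases x <;> fin_cases y <;>
      simp [Zgraph, SimpleGraph.fromRel_adj, G.irrefl, hbb', hab, hab', hau, hbb'.symm, hab.symm,
        hab'.symm, hau.symm, hub, hub', hbu, hb'u, Fin.ext_iff, -Fin.val_eq_zero_iff] <;> tauto

private lemma aux_first_entry {L : List V} : ∀ {x y : V} (_ : G.Walk x y), x ∉ L → y ∈ L →
    ∃ u a, u ∉ L ∧ a ∈ L ∧ G.Adj u a := by
  intro x y p
  induction p with
  | nil => intro hx hy; exact absurd hy hx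
  | @cons s t u h q ih =>
    intro hx hy
    by_cases ht : t ∈ L
    · exact ⟨s, t, hx, ht, h⟩
    · exact ih ht hy

private lemma aux_triangle {v a b : V}
    (hva : G.Adj v a) (hvb : G.Adj v b) (hab : G.Adj a b) :
    ∃ (w : V) (p : G.Walk w w), p.IsCycle ∧ p.length = 3 := by
  refine ⟨v, Walk.cons hva (Walk.cons hab (Walk.cons hvb.symm Walk.nil)), ?_, rfl⟩
  rw [Walk.cons_isCycle_iff]
  constructor
  · rw [Walk.cons_isPath_iff]
    refine ⟨?_, by simp [hab.ne, hva.ne']⟩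
    rw [Walk.cons_isPath_iff]
    exact ⟨Walk.IsPath.nil, by simp [hvb.ne']⟩
  · simp [Sym2.eq_iff, hva.ne, hva.ne', hvb.ne, hvb.ne', hab.ne, hab.ne']

private lemma aux_mem_tail_of_closed {v : V} (c : G.Walk v v) (hnn : ¬c.Nil) (x : V) :
    x ∈ c.support ↔ x ∈ c.support.tail := by
  obtain ⟨b, h, p, rfl⟩ := Walk.not_nil_iff.mp hnn
  rw [Walk.support_cons]
  simp only [List.tail_cons, List.mem_cons]
  constructor
  · rintro (rfl | h')
    · exact p.end_mem_support
    · exact h'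
  · exact fun h' => Or.inr h'

private lemma aux_exists_off_cycle [Fintype V] {v : V} (c : G.Walk v v) (hc : c.IsCycle)
    (hlt : c.length < Fintype.card V) : ∃ u, u ∉ c.support := by
  classical
  by_contra hno
  push_neg at hno
  have hnn : ¬c.Nil := by
    rw [Walk.not_nil_iff_lt_length]
    have := hc.three_le_length
    omega
  have hall : ∀ u : V, u ∈ c.support.tail :=
    fun u => (aux_mem_tail_of_closed c hnn u).mp (hno u)
  have hsub : (Finset.univ : Finset V) ⊆ c.support.tail.toFinset :=
    fun u _ => List.mem_toFinset.mpr (hall u)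
  have h1 := Finset.card_le_card hsub
  rw [Finset.card_univ] at h1
  have h2 := c.support.tail.toFinset_card_le
  have h3 := c.length_support
  have h4 : c.support.tail.length = c.support.length - 1 := by
    rw [List.length_tail]
  omega

private lemma aux_extend_at (hclaw : RFree G claw) (hZ1 : RFree G (Zgraph 1)) {a u : V}
    (c : G.Walk a a) (hc : c.IsCycle) (hu : u ∉ c.support) (hadj : G.Adj u a) :
    ∃ (w : V) (q : G.Walk w w), q.IsCycle ∧ q.length = c.length + 1 := by
  have hlen := hc.three_le_length
  have hnnil : ¬c.Nil := by rw [Walk.not_nil_iff_lt_length]; omega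
  obtain ⟨b, h, p, rfl⟩ := Walk.not_nil_iff.mp hnnil
  by_cases hub : G.Adj u b
  · obtain ⟨w, hw, hwl⟩ := aux_splice h p hc hu hadj hub
    exact ⟨a, w, hw, hwl⟩
  · have hd : (Walk.cons h p).reverse.IsCycle := aux_cycle_reverse hc
    have hdn : ¬(Walk.cons h p).reverse.Nil := by
      rw [Walk.not_nil_iff_lt_length, Walk.length_reverse]; omega
    obtain ⟨b', h', q, hdq⟩ := Walk.not_nil_iff.mp hdn
    have hqsup : ∀ x, x ∈ (Walk.cons h' q).support ↔ x ∈ (Walk.cons h p).support := by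
      intro x
      rw [← hdq, Walk.support_reverse, List.mem_reverse]
    by_cases hub' : G.Adj u b'
    · obtain ⟨w, hw, hwl⟩ :=
        aux_splice h' q (hdq ▸ hd) (fun hx => hu ((hqsup u).mp hx)) hadj hub'
      refine ⟨a, w, hw, ?_⟩
      rw [hwl]
      have hle : (Walk.cons h' q).length = (Walk.cons h p).length := by
        rw [← hdq, Walk.length_reverse]
      rw [hle]
    · exfalso
      have hab : G.Adj a b := h
      have hab' : G.Adj a b' := h'
      have hau : G.Adj a u := hadj.symm
      have hbmem : b ∈ (Walk.cons h p).support := by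
        rw [Walk.support_cons]; exact List.mem_cons_of_mem _ p.start_mem_support
      have hb'mem : b' ∈ (Walk.cons h p).support :=
        (hqsup b').mp (by rw [Walk.support_cons]; exact List.mem_cons_of_mem _ q.start_mem_support)
      have nbu : b ≠ u := fun e => hu (e ▸ hbmem)
      have nb'u : b' ≠ u := fun e => hu (e ▸ hb'mem)
      have hcc := (Walk.cons_isCycle_iff p h).mp hc
      have hpne : p.edges ≠ [] := by
        have hpl : p.edges.length = p.length := p.length_edges
        simp only [Walk.length_cons] at hlen
        intro hnil
        rw [hnil] at hpl
        simp at hpl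
        omega
      have hrevne : p.edges.reverse ≠ [] := by simpa using hpne
      obtain ⟨e, es, hee⟩ := List.exists_cons_of_ne_nil hrevne
      have hedgeeq : (Walk.cons h' q).edges = p.edges.reverse ++ [s(a, b)] := by
        rw [← hdq, Walk.edges_reverse, Walk.edges_cons, List.reverse_cons]
      have hkey : s(a, b') ∈ p.edges := by
        rw [Walk.edges_cons, hee] at hedgeeq
        simp only [List.cons_append, List.cons.injEq] at hedgeeq
        rw [← List.mem_reverse, hee, hedgeeq.1]
        exact List.mem_cons_self
      have nbb' : b ≠ b' := by
        intro e
        have he2 : s(a, b) = s(a, b') := by rw [e]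
        exact hcc.2 (he2 ▸ hkey)
      by_cases hbb' : G.Adj b b'
      · exact aux_no_Z1 hZ1 hbb' hab hab' hau hub hub' nbu nb'u
      · exact aux_no_claw hclaw hab hab' hau hbb'
          (fun x => hub x.symm) (fun x => hub' x.symm) nbb' nbu nb'u

variable [Fintype V]

private lemma aux_exists_third (x y : V) (h3 : 3 ≤ Fintype.card V) :
    ∃ u : V, u ≠ x ∧ u ≠ y := by
  classical
  by_contra h
  push_neg at h
  have hsub : (Finset.univ : Finset V) ⊆ {x, y} := by
    intro u _
    by_cases hx : u = x
    · simp [hx]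
    · simp [h u hx]
  have h1 := Finset.card_le_card hsub
  have hxy : ({x, y} : Finset V).card ≤ 2 := (Finset.card_insert_le _ _).trans (by simp)
  rw [Finset.card_univ] at h1
  omega

private lemma aux_first_step {W : Type} {H : SimpleGraph W} {x y : W} (p : H.Walk x y)
    (hxy : x ≠ y) : ∃ z, H.Adj x z := by
  cases p with
  | nil => exact absurd rfl hxy
  | cons h _ => exact ⟨_, h⟩

private lemma aux_connected (h2 : TwoConnected G) : G.Connected := by
  have hne : Nonempty V := Fintype.card_pos_iff.mp (lt_of_lt_of_le (by norm_num) h2.1)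
  rw [connected_iff]
  refine ⟨fun x y => ?_, hne⟩
  obtain ⟨u, hux, huy⟩ := aux_exists_third x y h2.1
  have hc := h2.2 u
  have hr : (G.induce {w : V | w ≠ u}).Reachable ⟨x, Ne.symm hux⟩ ⟨y, Ne.symm huy⟩ :=
    hc.preconnected _ _
  have := hr.map (SimpleGraph.Embedding.induce {w : V | w ≠ u}).toHom
  simpa using this

private lemma aux_exists_adj_ne (h2 : TwoConnected G) (v w : V) (hvw : v ≠ w) :
    ∃ x, G.Adj v x ∧ x ≠ w := by
  obtain ⟨u, huv, huw⟩ := aux_exists_third v w h2.1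
  have hc := h2.2 w
  have hr : (G.induce {z : V | z ≠ w}).Reachable ⟨v, hvw⟩ ⟨u, huw⟩ := hc.preconnected _ _
  obtain ⟨p⟩ := hr
  obtain ⟨z, hz⟩ := aux_first_step p (by simp [Subtype.ext_iff]; exact Ne.symm huv)
  simp only [SimpleGraph.comap_adj, Function.Embedding.coe_subtype] at hz
  exact ⟨z.val, hz, z.property⟩

end Auxiliary

theorem pancyclic_of_claw_Z1_free {V : Type} [Fintype V] (G : SimpleGraph V)
    [DecidableRel G.Adj] (h2 : TwoConnected G) (hnc : ¬ IsCycleGraph G)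
    (hclaw : RFree G claw) (hZ1 : RFree G (Zgraph 1)) :
    IsPancyclic G := by
  classical
  have hconn : G.Connected := aux_connected h2
  -- there is a vertex of degree at least 3
  obtain ⟨v, hv⟩ : ∃ v : V, G.degree v ≠ 2 := by
    by_contra hno
    push_neg at hno
    exact hnc ⟨hconn, hno⟩
  -- v has two distinct neighbors
  obtain ⟨u0, hu0v, -⟩ := aux_exists_third v v h2.1
  obtain ⟨x, hvx, -⟩ := aux_exists_adj_ne h2 v u0 (Ne.symm hu0v)
  obtain ⟨y, hvy, hyx⟩ := aux_exists_adj_ne h2 v x hvx.ne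
  have hdeg2 : 2 ≤ G.degree v := by
    have hsub : ({x, y} : Finset V) ⊆ G.neighborFinset v := by
      intro z hz
      rw [SimpleGraph.mem_neighborFinset]
      rcases Finset.mem_insert.mp hz with rfl | hz
      · exact hvx
      · rw [Finset.mem_singleton] at hz
        subst hz
        exact hvy
    calc 2 = ({x, y} : Finset V).card := (Finset.card_pair (Ne.symm hyx)).symm
    _ ≤ _ := Finset.card_le_card hsub
  have hdeg3 : 2 < G.degree v := by omega
  rw [SimpleGraph.degree] at hdeg3
  obtain ⟨a, b, c, ha, hb, hc, nab, nac, nbc⟩ := Finset.two_lt_card_iff.mp hdeg3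
  rw [SimpleGraph.mem_neighborFinset] at ha hb hc
  -- a triangle exists
  have base : HasCycleLength G 3 := by
    by_cases h1 : G.Adj a b
    · exact aux_triangle ha hb h1
    by_cases h3 : G.Adj a c
    · exact aux_triangle ha hc h3
    by_cases h4 : G.Adj b c
    · exact aux_triangle hb hc h4
    exact absurd (aux_no_claw hclaw ha hb hc h1 h3 h4 nab nac nbc) not_false
  -- induction on cycle length
  intro k hk3
  induction k, hk3 using Nat.le_induction with
  | base => exact fun _ => base
  | succ n hn ih =>
    intro hkn
    obtain ⟨w, d, hd, hdl⟩ := ih (by omega)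
    -- find a vertex off the cycle adjacent to it
    obtain ⟨z, hz⟩ := aux_exists_off_cycle d hd (by omega)
    obtain ⟨u', a', hu', ha', hadj⟩ :=
      aux_first_entry ((hconn.preconnected z w).some) hz d.start_mem_support
    -- rotate the cycle to start at a'
    have hd' : (d.rotate a' ha').IsCycle := hd.rotate ha'
    have hreallynn : ¬d.Nil := by
      rw [Walk.not_nil_iff_lt_length]
      have := hd.three_le_length
      omega
    have hrotnn : ¬(d.rotate a' ha').Nil := by
      rw [Walk.not_nil_iff_lt_length, aux_length_rotate]
      have := hd.three_le_length
      omega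
    have hu'' : u' ∉ (d.rotate a' ha').support := by
      intro hmem
      apply hu'
      rw [aux_mem_tail_of_closed _ hrotnn] at hmem
      rw [aux_mem_tail_of_closed _ hreallynn]
      exact (Walk.support_rotate d a' ha').mem_iff.mp hmem
    obtain ⟨w', q, hq, hql⟩ := aux_extend_at hclaw hZ1 (d.rotate a' ha') hd' hu'' hadj
    refine ⟨w', q, hq, ?_⟩
    rw [hql, aux_length_rotate, hdl]
end
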